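/- If φ is a skeleton on M, then for every s ∈ ℝ and δ > 0 the set {φ_n(s) : n ∈ ℕ, s − δ < s_n ≤ s} contains points arbitrarily close to any point of M, i.e. {φ_n(s) : n ∈ I^s \ I^{s−δ}} is dense in M. -/
import Mathlib


open Set Filter Topology

variable {M : Type*} [MetricSpace M] [ProperSpace M] [TopologicalSpace.SeparableSpace M]

/-- The restriction of the path `f` (with starting time `r`) as an element of the path
space `X`, represented as a pair of a starting time and a continuous map `ℝ → M`
constant before the starting time. -/
noncomputable def restrictPath (f : C(ℝ, M)) (r : ℝ) : ℝ × C(ℝ, M) :=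
  (r, f.comp ⟨fun t => max r t, continuous_const.max continuous_id⟩)

/-- **Density of the skeleton in the recent past.** Let `(φ n, s n)` be a skeleton on `M`
(conditions (Sk1) coalescence, (Sk2) denseness of starting points, (Sk3) relative
compactness of restrictions over compacts). Then for every `r ∈ ℝ` and `δ > 0` the set
`{φ n r : n ∈ I^r \ I^{r-δ}}` (values at time `r` of paths born in `(r-δ, r]`) is dense
in `M`. -/
theorem skeleton_past_dense
    (s : ℕ → ℝ) (φ : ℕ → C(ℝ, M))
    (hconst : ∀ n, ∀ t ≤ s n, φ n t = φ n (s n))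
    (hSk1 : ∀ m n r, s m ≤ r → s n ≤ r → φ m r = φ n r → ∀ t, r ≤ t → φ m t = φ n t)
    (hSk2 : Dense {q : ℝ × M | ∃ n, q = (s n, φ n (s n))})
    (hSk3 : ∀ L : Set (ℝ × M), IsCompact L →
      IsCompact (closure {p : ℝ × C(ℝ, M) | ∃ n r, s n ≤ r ∧ (r, φ n r) ∈ L ∧
        p = restrictPath (φ n) r})) :
    ∀ (r δ : ℝ), 0 < δ →
      Dense {y : M | ∃ n, r - δ < s n ∧ s n ≤ r ∧ y = φ n r} := by
  intro r δ hδ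
  rw [Metric.dense_iff]
  intro x ε hε
  -- Step 1: choose, for each k, a path starting in (r - min δ (k+1)⁻¹, r) with starting
  -- point within (k+1)⁻¹ of x.
  have hchoice : ∀ k : ℕ, ∃ n : ℕ,
      (r - δ < s n ∧ r - ((k : ℝ) + 1)⁻¹ < s n ∧ s n < r) ∧
      dist (φ n (s n)) x < ((k : ℝ) + 1)⁻¹ := by
    intro k
    have hpos : (0 : ℝ) < ((k : ℝ) + 1)⁻¹ := by positivity
    set a := max (r - δ) (r - ((k : ℝ) + 1)⁻¹) with ha_def
    have ha : a < r := by
      apply max_lt <;> linarith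
    have hU : IsOpen (Ioo a r ×ˢ Metric.ball x (((k : ℝ) + 1)⁻¹)) :=
      isOpen_Ioo.prod Metric.isOpen_ball
    have hne : (Ioo a r ×ˢ Metric.ball x (((k : ℝ) + 1)⁻¹)).Nonempty :=
      ⟨((a + r) / 2, x), ⟨by constructor <;> [skip; skip] <;> linarith,
        Metric.mem_ball_self hpos⟩⟩
    obtain ⟨q, hq, hqU⟩ := hSk2.exists_mem_open hU hne
    obtain ⟨n, rfl⟩ := hq
    obtain ⟨⟨hq1, hq2⟩, hq3⟩ := hqU
    exact ⟨n, ⟨lt_of_le_of_lt (le_max_left _ _) hq1,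
      lt_of_le_of_lt (le_max_right _ _) hq1, hq2⟩, hq3⟩
  choose n hn1 hn2 using hchoice
  -- Step 2: the restricted paths lie in a compact set.
  set L : Set (ℝ × M) := Icc (r - δ) r ×ˢ Metric.closedBall x 1 with hL_def
  have hLcomp : IsCompact L := isCompact_Icc.prod (isCompact_closedBall x 1)
  have hK := hSk3 L hLcomp
  set p : ℕ → ℝ × C(ℝ, M) := fun k => restrictPath (φ (n k)) (s (n k)) with hp_def
  have hpK : ∀ k, p k ∈ closure {p : ℝ × C(ℝ, M) | ∃ n r, s n ≤ r ∧ (r, φ n r) ∈ L ∧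
      p = restrictPath (φ n) r} := by
    intro k
    apply subset_closure
    refine ⟨n k, s (n k), le_refl _, ⟨⟨(hn1 k).1.le, (hn1 k).2.2.le⟩, ?_⟩, rfl⟩
    have h1 : ((k : ℝ) + 1)⁻¹ ≤ 1 := by
      rw [inv_le_one_iff₀]; right; push_cast; linarith [Nat.cast_nonneg (α := ℝ) k]
    exact Metric.mem_closedBall.2 (le_trans (hn2 k).le h1)
  -- Step 3: extract a convergent subsequence.
  obtain ⟨⟨r₀, g⟩, -, ψ, hψmono, hψt⟩ := hK.isSeqCompact hpK
  -- auxiliary convergences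
  have hinv : Tendsto (fun k : ℕ => ((k : ℝ) + 1)⁻¹) atTop (𝓝 0) :=
    tendsto_one_div_add_atTop_nhds_zero_nat.congr (by intro k; rw [one_div])
  have hsr : Tendsto (fun k => s (n k)) atTop (𝓝 r) := by
    have hlow : Tendsto (fun k : ℕ => r - ((k : ℝ) + 1)⁻¹) atTop (𝓝 r) := by
      simpa using tendsto_const_nhds.sub hinv
    exact tendsto_of_tendsto_of_tendsto_of_le_of_le hlow tendsto_const_nhds
      (fun k => (hn1 k).2.1.le) (fun k => (hn1 k).2.2.le)
  have hsrψ : Tendsto (fun k => s (n (ψ k))) atTop (𝓝 r) :=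
    hsr.comp hψmono.tendsto_atTop
  have h1 : Tendsto (fun k => (p (ψ k)).1) atTop (𝓝 r₀) :=
    (continuous_fst.tendsto _).comp hψt
  have hr₀ : r = r₀ := by
    have h1' : Tendsto (fun k => s (n (ψ k))) atTop (𝓝 r₀) := h1
    exact tendsto_nhds_unique hsrψ h1'
  subst hr₀
  have h2 : Tendsto (fun k => (p (ψ k)).2) atTop (𝓝 g) :=
    (continuous_snd.tendsto _).comp hψt
  -- Step 4: uniform convergence on [r - δ, r].
  have hUC : TendstoUniformlyOn (fun k t => (p (ψ k)).2 t) g atTop (Icc (r - δ) r) :=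
    ContinuousMap.tendsto_iff_forall_isCompact_tendstoUniformlyOn.mp h2 _ isCompact_Icc
  have hval : ∀ k t, (p (ψ k)).2 t = φ (n (ψ k)) (max (s (n (ψ k))) t) := fun k t => rfl
  -- the starting points converge to x and to g r, hence g r = x
  have hmemIcc : ∀ k, s (n (ψ k)) ∈ Icc (r - δ) r :=
    fun k => ⟨(hn1 (ψ k)).1.le, (hn1 (ψ k)).2.2.le⟩
  have hg_tendsto : Tendsto (fun k => (p (ψ k)).2 (s (n (ψ k)))) atTop (𝓝 (g r)) := by
    apply hUC.tendsto_comp (g.continuous.continuousWithinAt)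
    exact tendsto_nhdsWithin_of_tendsto_nhds_of_eventually_within _ hsrψ
      (Eventually.of_forall hmemIcc)
  have hx_tendsto : Tendsto (fun k => (p (ψ k)).2 (s (n (ψ k)))) atTop (𝓝 x) := by
    rw [tendsto_iff_dist_tendsto_zero]
    have hb : ∀ k, dist ((p (ψ k)).2 (s (n (ψ k)))) x ≤ ((k : ℝ) + 1)⁻¹ := by
      intro k
      have : (p (ψ k)).2 (s (n (ψ k))) = φ (n (ψ k)) (s (n (ψ k))) := by
        rw [hval, max_self]
      rw [this]
      refine le_trans (hn2 (ψ k)).le ?_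
      have hkψ : (k : ℝ) ≤ (ψ k : ℝ) := by exact_mod_cast hψmono.le_apply
      apply inv_anti₀ (by positivity) (by linarith)
    exact squeeze_zero (fun k => dist_nonneg) hb hinv
  have hgr : g r = x := tendsto_nhds_unique hg_tendsto hx_tendsto
  -- Step 5: values at time r converge to x.
  have hrIcc : r ∈ Icc (r - δ) r := ⟨by linarith, le_refl r⟩
  have hfr : Tendsto (fun k => (p (ψ k)).2 r) atTop (𝓝 x) := by
    rw [← hgr]; exact hUC.tendsto_at hrIcc
  have hfr' : Tendsto (fun k => φ (n (ψ k)) r) atTop (𝓝 x) := by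
    refine hfr.congr fun k => ?_
    rw [hval, max_eq_right (hn1 (ψ k)).2.2.le]
  -- Step 6: conclude.
  have := (Metric.tendsto_nhds.mp hfr' ε hε).exists
  obtain ⟨k, hk⟩ := this
  refine ⟨φ (n (ψ k)) r, Metric.mem_ball.2 hk, n (ψ k), (hn1 (ψ k)).1,
    (hn1 (ψ k)).2.2.le, rfl⟩
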